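/- If a point set P ⊂ [0,1]² is k-increasing (avoids the decreasing pattern of length k+1), then there is a tour of P of Euclidean length at most 3k + 2·√2 (in particular O(k)). -/

import Mathlib

namespace KTSP

variable {n k : ℕ} (P : Fin n → EuclideanSpace ℝ (Fin 2))

/-- decreasing-pattern step: i is up-left of j -/
def R (i j : Fin n) : Prop := P i 0 < P j 0 ∧ P j 1 < P i 1

theorem R_trans {i j l : Fin n} (h1 : R P i j) (h2 : R P j l) : R P i l :=
  ⟨h1.1.trans h2.1, h2.2.trans h1.2⟩

/-- lengths (minus 1) of decreasing chains ending at i -/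
def S (i : Fin n) : Set ℕ :=
  {m | ∃ f : Fin (m+1) → Fin n,
    (∀ a b : Fin (m+1), a < b → R P (f a) (f b)) ∧ f (Fin.last m) = i}

theorem zero_mem_S (i : Fin n) : 0 ∈ S P i :=
  ⟨fun _ => i, fun a b hab => absurd (Fin.lt_def.mp hab) (by omega), rfl⟩

variable (havoid : ¬ ∃ f : Fin (k + 1) → Fin n,
      StrictMono (fun t => P (f t) 0) ∧ StrictAnti (fun t => P (f t) 1))

include havoid in
theorem mem_S_lt {i : Fin n} {m : ℕ} (hm : m ∈ S P i) : m < k := by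
  obtain ⟨f, hf, -⟩ := hm
  by_contra h
  push_neg at h
  refine havoid ⟨fun a => f ⟨a.1, by omega⟩, ?_, ?_⟩
  · intro a b hab
    exact (hf _ _ (Fin.mk_lt_mk.mpr (Fin.lt_def.mp hab))).1
  · intro a b hab
    exact (hf _ _ (Fin.mk_lt_mk.mpr (Fin.lt_def.mp hab))).2

include havoid in
theorem bddAbove_S (i : Fin n) : BddAbove (S P i) :=
  ⟨k, fun _ hm => (mem_S_lt P havoid hm).le⟩

noncomputable def ht (i : Fin n) : ℕ := sSup (S P i)

include havoid in
theorem ht_mem (i : Fin n) : ht P i ∈ S P i :=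
  Nat.sSup_mem ⟨0, zero_mem_S P i⟩ (bddAbove_S P havoid i)

include havoid in
theorem ht_lt (i : Fin n) : ht P i < k := mem_S_lt P havoid (ht_mem P havoid i)

include havoid in
theorem ht_strict {i j : Fin n} (hij : R P i j) : ht P i < ht P j := by
  obtain ⟨f, hf, hlast⟩ := ht_mem P havoid i
  have hmem : ht P i + 1 ∈ S P j := by
    refine ⟨fun a => if h : (a : ℕ) < ht P i + 1 then f ⟨a, h⟩ else j, ?_, ?_⟩
    · intro a b hab
      have hab' : (a : ℕ) < (b : ℕ) := Fin.lt_def.mp hab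
      by_cases hb : (b : ℕ) < ht P i + 1
      · have ha : (a : ℕ) < ht P i + 1 := hab'.trans hb
        simp only [dif_pos ha, dif_pos hb]
        exact hf _ _ (Fin.mk_lt_mk.mpr hab')
      · have ha : (a : ℕ) < ht P i + 1 := by have := b.isLt; omega
        simp only [dif_pos ha, dif_neg hb]
        by_cases ha' : (a : ℕ) = ht P i
        · have he : (⟨(a : ℕ), ha⟩ : Fin (ht P i + 1)) = Fin.last (ht P i) := Fin.ext ha'
          rw [he, hlast]; exact hij
        · have h1 : R P (f ⟨a, ha⟩) (f (Fin.last (ht P i))) :=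
            hf _ (Fin.last (ht P i)) (by rw [Fin.lt_def]; simp only [Fin.val_last]; omega)
          rw [hlast] at h1
          exact R_trans P h1 hij
    · have hl : ¬ ((Fin.last (ht P i + 1) : ℕ) < ht P i + 1) := by simp
      simp only [dif_neg hl]
  exact Nat.lt_of_succ_le (le_csSup (bddAbove_S P havoid j) hmem)

include havoid in
theorem counting {M : ℕ} (f : Fin (M+1) → Fin n)
    (hf : ∀ a b : Fin (M+1), a < b → R P (f a) (f b)) :
    ∀ j (hj : j < M + 1), j ≤ ht P (f ⟨j, hj⟩) := by
  intro j
  induction j with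
  | zero => intro _; exact Nat.zero_le _
  | succ j ih =>
    intro hj
    have hj' : j < M + 1 := by omega
    have h1 := ih hj'
    have h2 : R P (f ⟨j, hj'⟩) (f ⟨j+1, hj⟩) := hf _ _ (Fin.mk_lt_mk.mpr (by omega))
    have := ht_strict P havoid h2
    omega

variable (hgen : ∀ i j : Fin n, i ≠ j → P i 0 ≠ P j 0 ∧ P i 1 ≠ P j 1)

include havoid hgen in
theorem level_chain {i j : Fin n} (hlev : ht P i = ht P j) (hx : P i 0 < P j 0) :
    P i 1 < P j 1 := by
  have hne : i ≠ j := fun h => lt_irrefl _ (h ▸ hx)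
  rcases lt_trichotomy (P i 1) (P j 1) with h | h | h
  · exact h
  · exact absurd h (hgen i j hne).2
  · exact absurd (ht_strict P havoid ⟨hx, h⟩) (by omega)

theorem dist_pts (x y : EuclideanSpace ℝ (Fin 2)) :
    dist x y = Real.sqrt (|x 0 - y 0|^2 + |x 1 - y 1|^2) := by
  rw [EuclideanSpace.dist_eq]
  congr 1
  rw [Fin.sum_univ_two, Real.dist_eq, Real.dist_eq]

theorem dist_le_abs (x y : EuclideanSpace ℝ (Fin 2)) :
    dist x y ≤ |x 0 - y 0| + |x 1 - y 1| := by
  rw [dist_pts]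
  calc Real.sqrt (|x 0 - y 0|^2 + |x 1 - y 1|^2)
      ≤ Real.sqrt ((|x 0 - y 0| + |x 1 - y 1|)^2) := by
        apply Real.sqrt_le_sqrt
        nlinarith [abs_nonneg (x 0 - y 0), abs_nonneg (x 1 - y 1)]
    _ = |x 0 - y 0| + |x 1 - y 1| :=
        Real.sqrt_sq (by positivity)

theorem dist_le_sqrt2' {x y : EuclideanSpace ℝ (Fin 2)}
    (hx : ∀ t : Fin 2, x t ∈ Set.Icc (0:ℝ) 1) (hy : ∀ t : Fin 2, y t ∈ Set.Icc (0:ℝ) 1) :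
    dist x y ≤ Real.sqrt 2 := by
  rw [dist_pts]
  apply Real.sqrt_le_sqrt
  have h0x := hx 0; have h1x := hx 1; have h0y := hy 0; have h1y := hy 1
  simp only [Set.mem_Icc] at *
  have a1 : |x 0 - y 0| ≤ 1 := abs_le.mpr ⟨by linarith [h0x.1, h0y.2], by linarith [h0x.2, h0y.1]⟩
  have a2 : |x 1 - y 1| ≤ 1 := abs_le.mpr ⟨by linarith [h1x.1, h1y.2], by linarith [h1x.2, h1y.1]⟩
  nlinarith [abs_nonneg (x 0 - y 0), abs_nonneg (x 1 - y 1)]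

noncomputable def key (i : Fin n) : ℕ ×ₗ ℝ :=
  toLex (ht P i, if Even (ht P i) then P i 0 else -(P i 0))

noncomputable def Ψ (i : Fin n) : ℝ :=
  ((2 * (ht P i : ℝ) + if Even (ht P i) then 0 else 2)) +
    (if Even (ht P i) then P i 0 + P i 1 else -(P i 0 + P i 1))

theorem step
    (hbox : ∀ (i : Fin n) (t : Fin 2), P i t ∈ Set.Icc (0 : ℝ) 1)
    (hgen : ∀ i j : Fin n, i ≠ j → P i 0 ≠ P j 0 ∧ P i 1 ≠ P j 1)
    (havoid : ¬ ∃ f : Fin (k + 1) → Fin n,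
      StrictMono (fun t => P (f t) 0) ∧ StrictAnti (fun t => P (f t) 1))
    {p q : Fin n}
    (hlt : key P p < key P q)
    (hdi : ∀ r : Fin n, key P r ≤ key P p ∨ key P q ≤ key P r) :
    dist (P p) (P q) ≤ Ψ P q - Ψ P p := by
  have hd := dist_le_abs (P p) (P q)
  have bxp := hbox p 0; have byp := hbox p 1
  have bxq := hbox q 0; have byq := hbox q 1
  simp only [Set.mem_Icc] at bxp byp bxq byq
  have hA : |P p 0 - P q 0| ≤ 1 := abs_le.mpr ⟨by linarith, by linarith⟩
  have hB : |P p 1 - P q 1| ≤ 1 := abs_le.mpr ⟨by linarith, by linarith⟩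
  have hA' : |P p 0 - P q 0| ≤ P p 0 + P q 0 := abs_le.mpr ⟨by linarith, by linarith⟩
  have hB' : |P p 1 - P q 1| ≤ P p 1 + P q 1 := abs_le.mpr ⟨by linarith, by linarith⟩
  simp only [key, Prod.Lex.lt_iff, ofLex_toLex] at hlt
  rcases hlt with hlev | ⟨hlev, hs⟩
  · -- different levels
    by_cases hep : Even (ht P p) <;> by_cases heq : Even (ht P q)
    · -- S1 even-even : levels differ by ≥ 2
      have hpar : ht P p + 2 ≤ ht P q := by
        rw [Nat.even_iff] at hep heq; omega
      have hpar' : (ht P p : ℝ) + 2 ≤ (ht P q : ℝ) := by exact_mod_cast hpar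
      simp only [Ψ, if_pos hep, if_pos heq]
      linarith
    · -- S2 even-odd : hard case, needs structure
      obtain ⟨f, hf, hflast⟩ := ht_mem P havoid q
      have htlt : ht P p < ht P q := hlev
      set e : Fin n := f ⟨ht P p, by omega⟩ with he_def
      have hre : R P e q := by
        have := hf ⟨ht P p, by omega⟩ (Fin.last (ht P q))
          (by rw [Fin.lt_def]; simp only [Fin.val_last]; omega)
        rwa [hflast] at this
      have h1 : ht P p ≤ ht P e := counting P havoid f hf _ _
      have h2 : ht P e < ht P q := ht_strict P havoid hre
      have h3 : ht P e = ht P p := by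
        by_contra hne
        have h4 : ht P p < ht P e := by omega
        rcases hdi e with hle | hle <;>
          simp only [key, Prod.Lex.le_iff, ofLex_toLex] at hle <;>
          rcases hle with h5 | ⟨h5, -⟩ <;> omega
      have he_le : key P e ≤ key P p := by
        rcases hdi e with hle | hle
        · exact hle
        · exfalso
          simp only [key, Prod.Lex.le_iff, ofLex_toLex] at hle
          rcases hle with h5 | ⟨h5, -⟩ <;> omega
      have hxe : P e 0 ≤ P p 0 := by
        simp only [key, Prod.Lex.le_iff, ofLex_toLex, h3, if_pos (h3 ▸ hep), if_pos hep] at he_le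
        rcases he_le with h5 | ⟨-, h5⟩
        · omega
        · exact h5
      have hye : P e 1 ≤ P p 1 := by
        rcases eq_or_ne e p with he | hne
        · exact le_of_eq (by rw [he])
        · have : P e 0 < P p 0 := lt_of_le_of_ne hxe (hgen e p hne).1
          exact (level_chain P havoid hgen h3 this).le
      have hyq : P q 1 < P p 1 := lt_of_lt_of_le hre.2 hye
      have habx : |P p 0 - P q 0| + P p 0 + P q 0 ≤ 2 := by
        rcases abs_cases (P p 0 - P q 0) with ⟨h6, -⟩ | ⟨h6, -⟩ <;> rw [h6] <;> linarith
      have haby : |P p 1 - P q 1| = P p 1 - P q 1 := abs_of_pos (by linarith)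
      have hpar' : (ht P p : ℝ) + 1 ≤ (ht P q : ℝ) := by exact_mod_cast htlt
      simp only [Ψ, if_pos hep, if_neg heq]
      linarith
    · -- S3 odd-even : free
      have hpar' : (ht P p : ℝ) + 1 ≤ (ht P q : ℝ) := by exact_mod_cast hlev
      simp only [Ψ, if_neg hep, if_pos heq]
      linarith
    · -- S4 odd-odd
      have hpar : ht P p + 2 ≤ ht P q := by
        rw [Nat.even_iff] at hep heq; omega
      have hpar' : (ht P p : ℝ) + 2 ≤ (ht P q : ℝ) := by exact_mod_cast hpar
      simp only [Ψ, if_neg hep, if_neg heq]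
      linarith
  · -- same level
    by_cases hep : Even (ht P p)
    · rw [if_pos hep, if_pos (hlev ▸ hep)] at hs
      have hy : P p 1 < P q 1 := level_chain P havoid hgen hlev hs
      have e1 : |P p 0 - P q 0| = P q 0 - P p 0 := by rw [abs_of_neg (by linarith)]; ring
      have e2 : |P p 1 - P q 1| = P q 1 - P p 1 := by rw [abs_of_neg (by linarith)]; ring
      simp only [Ψ, if_pos hep, if_pos (hlev ▸ hep), hlev]
      linarith
    · rw [if_neg hep, if_neg (hlev ▸ hep)] at hs
      have hx : P q 0 < P p 0 := by linarith
      have hy : P q 1 < P p 1 := level_chain P havoid hgen (hlev.symm) hx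
      have e1 : |P p 0 - P q 0| = P p 0 - P q 0 := abs_of_pos (by linarith)
      have e2 : |P p 1 - P q 1| = P p 1 - P q 1 := abs_of_pos (by linarith)
      simp only [Ψ, if_neg hep, if_neg (hlev ▸ hep), hlev]
      linarith


noncomputable def tele {N : ℕ} (Q : Fin N → EuclideanSpace ℝ (Fin 2))
    (σ : Equiv.Perm (Fin N)) (j : ℕ) : ℝ :=
  if hj : j < N then Ψ Q (σ ⟨j, hj⟩) else 0

theorem key_inj (hgen : ∀ i j : Fin n, i ≠ j → P i 0 ≠ P j 0 ∧ P i 1 ≠ P j 1) :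
    Function.Injective (key P) := by
  intro i j hij
  have h2 : ht P i = ht P j ∧
      (if Even (ht P i) then P i 0 else -(P i 0)) =
      (if Even (ht P j) then P j 0 else -(P j 0)) := by
    have := congrArg ofLex hij
    simpa [key, Prod.ext_iff] using this
  by_contra hne
  obtain ⟨he, hs⟩ := h2
  rw [he] at hs
  have hx : P i 0 ≠ P j 0 := (hgen i j hne).1
  by_cases hev : Even (ht P j) <;> simp only [if_pos, if_neg, hev, if_true, if_false] at hs
  · exact hx hs
  · exact hx (by linarith [hs])

end KTSP

open KTSP in
/-- If a point set `P ⊆ [0,1]²` in general position is `k`-increasing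
(avoids the decreasing pattern of length `k+1`, i.e. has no `k+1` points with increasing
x-coordinates and decreasing y-coordinates), then there is a closed tour of `P` of
Euclidean length at most `3k + 2√2` (in particular `O(k)`). -/
theorem k_increasing_tsp_bound {n k : ℕ} [NeZero n]
    (P : Fin n → EuclideanSpace ℝ (Fin 2))
    (hbox : ∀ (i : Fin n) (t : Fin 2), P i t ∈ Set.Icc (0 : ℝ) 1)
    (hgen : ∀ i j : Fin n, i ≠ j → P i 0 ≠ P j 0 ∧ P i 1 ≠ P j 1)
    (havoid : ¬ ∃ f : Fin (k + 1) → Fin n,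
      StrictMono (fun t => P (f t) 0) ∧ StrictAnti (fun t => P (f t) 1)) :
    ∃ σ : Equiv.Perm (Fin n),
      ∑ i : Fin n, dist (P (σ i)) (P (σ (i + 1))) ≤ 3 * k + 2 * Real.sqrt 2 := by
  classical
  have hn : 0 < n := Nat.pos_of_ne_zero (NeZero.ne n)
  rcases Nat.eq_zero_or_pos k with hk0 | hk
  · subst hk0
    exact absurd ⟨fun _ => ⟨0, hn⟩,
      fun a b hab => absurd (Fin.lt_def.mp hab) (by omega),
      fun a b hab => absurd (Fin.lt_def.mp hab) (by omega)⟩ havoid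
  obtain ⟨m, rfl⟩ : ∃ m, n = m + 1 := ⟨n - 1, by omega⟩
  set σ : Equiv.Perm (Fin (m+1)) := Tuple.sort (key P) with hσ
  refine ⟨σ, ?_⟩
  have hmono : Monotone (key P ∘ σ) := Tuple.monotone_sort (key P)
  have hstrict : StrictMono (key P ∘ σ) :=
    hmono.strictMono_of_injective ((key_inj P hgen).comp σ.injective)
  -- per-step bound
  have hstep : ∀ a : Fin m,
      dist (P (σ a.castSucc)) (P (σ a.succ)) ≤ Ψ P (σ a.succ) - Ψ P (σ a.castSucc) := by
    intro a
    refine step P hbox hgen havoid (hstrict (Fin.castSucc_lt_succ (i := a))) ?_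
    intro r0
    obtain ⟨b, rfl⟩ : ∃ b, r0 = σ b := ⟨σ.symm r0, (σ.apply_symm_apply r0).symm⟩
    rcases le_or_gt b a.castSucc with hb | hb
    · exact Or.inl (hmono hb)
    · exact Or.inr (hmono (Fin.castSucc_lt_iff_succ_le.mp hb))
  -- telescoping
  have hub : ∀ i, Ψ P i ≤ 2 * k := by
    intro i
    have h1 : ht P i < k := ht_lt P havoid i
    have h1' : (ht P i : ℝ) + 1 ≤ (k : ℝ) := by exact_mod_cast h1
    have b0 := hbox i 0; have b1 := hbox i 1
    simp only [Set.mem_Icc] at b0 b1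
    by_cases hev : Even (ht P i)
    · simp only [Ψ, if_pos hev]; linarith
    · simp only [Ψ, if_neg hev]; linarith
  have hlb : ∀ i, 0 ≤ Ψ P i := by
    intro i
    have b0 := hbox i 0; have b1 := hbox i 1
    simp only [Set.mem_Icc] at b0 b1
    by_cases hev : Even (ht P i)
    · simp only [Ψ, if_pos hev]
      linarith [(Nat.cast_nonneg (ht P i) : (0:ℝ) ≤ (ht P i : ℝ))]
    · have h1 : 1 ≤ ht P i := by
        rcases Nat.eq_zero_or_pos (ht P i) with h | h
        · exact absurd (h ▸ Even.zero) hev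
        · exact h
      have h1' : (1 : ℝ) ≤ (ht P i : ℝ) := by exact_mod_cast h1
      simp only [Ψ, if_neg hev]
      linarith
  -- path sum
  have hpath : ∑ a : Fin m, dist (P (σ a.castSucc)) (P (σ a.succ)) ≤ 2 * k := by
    calc ∑ a : Fin m, dist (P (σ a.castSucc)) (P (σ a.succ))
        ≤ ∑ a : Fin m, (Ψ P (σ a.succ) - Ψ P (σ a.castSucc)) :=
          Finset.sum_le_sum fun a _ => hstep a
      _ = ∑ a ∈ Finset.range m, (tele P σ (a+1) - tele P σ a) := by
          rw [← Fin.sum_univ_eq_sum_range (fun j => tele P σ (j+1) - tele P σ j) m]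
          refine Finset.sum_congr rfl fun a _ => ?_
          have hlt1 : (a : ℕ) + 1 < m + 1 := by omega
          have hlt2 : (a : ℕ) < m + 1 := by omega
          have e1 : tele P σ ((a : ℕ) + 1) = Ψ P (σ a.succ) := by
            simp only [tele]; rw [dif_pos hlt1]
            rfl
          have e2 : tele P σ (a : ℕ) = Ψ P (σ a.castSucc) := by
            simp only [tele]; rw [dif_pos hlt2]
            rfl
          rw [e1, e2]
      _ = tele P σ m - tele P σ 0 := Finset.sum_range_sub (tele P σ) m
      _ ≤ 2 * k - 0 := by
          have e1 : tele P σ m = Ψ P (σ (Fin.last m)) := by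
            simp only [tele]; rw [dif_pos (Nat.lt_succ_self m)]
            rfl
          have e2 : tele P σ 0 = Ψ P (σ 0) := by
            simp only [tele]; rw [dif_pos (Nat.succ_pos m)]
            congr 1
          rw [e1, e2]
          have := hub (σ (Fin.last m)); have := hlb (σ 0)
          linarith
      _ = 2 * k := by ring
  rw [Fin.sum_univ_castSucc]
  have hclose : dist (P (σ (Fin.last m + 1))) (P (σ 0)) ≤ Real.sqrt 2 := by
    exact dist_le_sqrt2' (fun t => hbox _ t) (fun t => hbox _ t)
  have hsq : (0:ℝ) ≤ Real.sqrt 2 := Real.sqrt_nonneg 2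
  have hkr : (1:ℝ) ≤ (k:ℝ) := by exact_mod_cast hk
  calc (∑ a : Fin m, dist (P (σ a.castSucc)) (P (σ (a.castSucc + 1)))) +
        dist (P (σ (Fin.last m))) (P (σ (Fin.last m + 1)))
      = (∑ a : Fin m, dist (P (σ a.castSucc)) (P (σ a.succ))) +
        dist (P (σ (Fin.last m))) (P (σ 0)) := by
        rw [Fin.last_add_one]
        refine congrArg₂ (· + ·) (Finset.sum_congr rfl fun a _ => ?_) rfl
        rw [Fin.coeSucc_eq_succ]
    _ ≤ 2 * k + Real.sqrt 2 := by
        refine add_le_add hpath ?_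
        exact dist_le_sqrt2' (fun t => hbox _ t) (fun t => hbox _ t)
    _ ≤ 3 * k + 2 * Real.sqrt 2 := by linarith
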